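/- Three-party greedy handshaking in PCL: for all propositional atoms a, b, c, the formula (((b ∧ c) ↠ a) ∧ ((a ∧ c) ↠ b) ∧ ((a ∧ b) ↠ c)) → (a ∧ b ∧ c) is a theorem of PCL. -/

import Mathlib

namespace Contracts

/-! ### PCL: propositional contract logic -/

inductive PCL (A : Type) : Type where
  | atom (a : A)
  | top
  | bot
  | and (p q : PCL A)
  | or (p q : PCL A)
  | imp (p q : PCL A)
  | cimp (p q : PCL A)    -- contractual implication ↠

namespace PCL

/-- Hilbert-style provability for PCL: intuitionistic propositional logic
extended with the axioms `⊤ ↠ ⊤`, `(p ↠ p) → p` and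
`(p' → p) → (p ↠ q) → (q → q') → (p' ↠ q')`. -/
inductive Proof {A : Type} : Set (PCL A) → PCL A → Prop where
  | ax {Γ : Set (PCL A)} {p} (h : p ∈ Γ) : Proof Γ p
  | mp {Γ} {p q} (h1 : Proof Γ (imp p q)) (h2 : Proof Γ p) : Proof Γ q
  | axK {Γ} {p q} : Proof Γ (imp p (imp q p))
  | axS {Γ} {p q r} : Proof Γ (imp (imp p (imp q r)) (imp (imp p q) (imp p r)))
  | andI {Γ} {p q} : Proof Γ (imp p (imp q (and p q)))
  | andE1 {Γ} {p q} : Proof Γ (imp (and p q) p)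
  | andE2 {Γ} {p q} : Proof Γ (imp (and p q) q)
  | orI1 {Γ} {p q} : Proof Γ (imp p (or p q))
  | orI2 {Γ} {p q} : Proof Γ (imp q (or p q))
  | orE {Γ} {p q r} : Proof Γ (imp (imp p r) (imp (imp q r) (imp (or p q) r)))
  | topI {Γ} : Proof Γ top
  | botE {Γ} {p} : Proof Γ (imp bot p)
  | cimpTop {Γ} : Proof Γ (cimp top top)
  | cimpFix {Γ} {p} : Proof Γ (imp (cimp p p) p)
  | cimpMono {Γ} {p p' q q'} :
      Proof Γ (imp (imp p' p) (imp (cimp p q) (imp (imp q q') (cimp p' q'))))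

end PCL

end Contracts

open Contracts

namespace Contracts.PCL

variable {A : Type}

theorem Proof.weaken {Γ Δ : Set (PCL A)} {p} (hs : Γ ⊆ Δ) (h : Proof Γ p) :
    Proof Δ p := by
  induction h generalizing Δ with
  | ax h => exact .ax (hs h)
  | mp _ _ ih1 ih2 => exact .mp (ih1 hs) (ih2 hs)
  | axK => exact .axK
  | axS => exact .axS
  | andI => exact .andI
  | andE1 => exact .andE1
  | andE2 => exact .andE2
  | orI1 => exact .orI1
  | orI2 => exact .orI2
  | orE => exact .orE
  | topI => exact .topI
  | botE => exact .botE
  | cimpTop => exact .cimpTop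
  | cimpFix => exact .cimpFix
  | cimpMono => exact .cimpMono

theorem Proof.id {Γ : Set (PCL A)} (p : PCL A) : Proof Γ (imp p p) :=
  .mp (.mp (.axS (q := imp p p)) .axK) .axK

/-- Deduction theorem. -/
theorem Proof.impI {Γ : Set (PCL A)} {p q} (h : Proof (insert p Γ) q) :
    Proof Γ (imp p q) := by
  generalize hΔ : insert p Γ = Δ at h
  induction h generalizing Γ with
  | ax h =>
    subst hΔ
    rcases h with h | h
    · subst h; exact Proof.id _
    · exact .mp .axK (.ax h)
  | mp _ _ ih1 ih2 => exact .mp (.mp .axS (ih1 hΔ)) (ih2 hΔ)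
  | axK => exact .mp .axK .axK
  | axS => exact .mp .axK .axS
  | andI => exact .mp .axK .andI
  | andE1 => exact .mp .axK .andE1
  | andE2 => exact .mp .axK .andE2
  | orI1 => exact .mp .axK .orI1
  | orI2 => exact .mp .axK .orI2
  | orE => exact .mp .axK .orE
  | topI => exact .mp .axK .topI
  | botE => exact .mp .axK .botE
  | cimpTop => exact .mp .axK .cimpTop
  | cimpFix => exact .mp .axK .cimpFix
  | cimpMono => exact .mp .axK .cimpMono

/-- Conjunction introduction, rule form. -/
theorem Proof.aI {Γ : Set (PCL A)} {p q} (hp : Proof Γ p) (hq : Proof Γ q) :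
    Proof Γ (and p q) := .mp (.mp .andI hp) hq

/-- From `p ↠ q` and `p`, derive `q`. -/
theorem Proof.detach {Γ : Set (PCL A)} {p q} (hc : Proof Γ (cimp p q))
    (hp : Proof Γ p) : Proof Γ q := by
  have h1 : Proof Γ (cimp top q) :=
    .mp (.mp (.mp .cimpMono (.mp .axK hp)) hc) (Proof.id q)
  have h2 : Proof Γ (cimp q q) :=
    .mp (.mp (.mp .cimpMono (.mp .axK .topI)) h1) (Proof.id q)
  exact .mp .cimpFix h2

end Contracts.PCL

/-- Three-party greedy handshaking in PCL:
`⊢ ((b ∧ c) ↠ a) ∧ ((a ∧ c) ↠ b) ∧ ((a ∧ b) ↠ c) → a ∧ b ∧ c`. -/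
theorem pcl_three_party_handshake {A : Type} (a b c : A) :
    PCL.Proof (∅ : Set (PCL A))
      (.imp
        (.and (.cimp (.and (.atom b) (.atom c)) (.atom a))
          (.and (.cimp (.and (.atom a) (.atom c)) (.atom b))
            (.cimp (.and (.atom a) (.atom b)) (.atom c))))
        (.and (.atom a) (.and (.atom b) (.atom c)))) := by
  apply PCL.Proof.impI
  set pa : PCL A := .atom a
  set pb : PCL A := .atom b
  set pc : PCL A := .atom c
  set H : PCL A := .and (.cimp (.and pb pc) pa)
      (.and (.cimp (.and pa pc) pb) (.cimp (.and pa pb) pc))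
  -- In any context proving the three contracts, we can derive a ∧ (b ∧ c).
  have key : ∀ (Γ : Set (PCL A)),
      PCL.Proof Γ (.cimp (.and pb pc) pa) →
      PCL.Proof Γ (.cimp (.and pa pc) pb) →
      PCL.Proof Γ (.cimp (.and pa pb) pc) →
      PCL.Proof Γ (.and pa (.and pb pc)) := by
    intro Γ h1 h2 h3
    -- derive b in any context extending Γ that also proves a
    have hbstep : ∀ (Δ : Set (PCL A)), Γ ⊆ Δ → PCL.Proof Δ pa → PCL.Proof Δ pb := by
      intro Δ hs ha
      have h2' := h2.weaken hs
      have h3' := h3.weaken hs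
      -- b → (a ∧ c) in Δ
      have hbac : PCL.Proof Δ (.imp pb (.and pa pc)) := by
        apply PCL.Proof.impI
        have hs' : Δ ⊆ insert pb Δ := Set.subset_insert _ _
        have hb'' : PCL.Proof (insert pb Δ) pb := .ax (Set.mem_insert _ _)
        have ha'' := ha.weaken hs'
        have hc'' : PCL.Proof (insert pb Δ) pc :=
          (h3'.weaken hs').detach (ha''.aI hb'')
        exact ha''.aI hc''
      have hbb : PCL.Proof Δ (.cimp pb pb) :=
        .mp (.mp (.mp .cimpMono hbac) h2') (PCL.Proof.id pb)
      exact .mp .cimpFix hbb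
    -- a → (b ∧ c) in Γ
    have habc : PCL.Proof Γ (.imp pa (.and pb pc)) := by
      apply PCL.Proof.impI
      have hs : Γ ⊆ insert pa Γ := Set.subset_insert _ _
      have ha' : PCL.Proof (insert pa Γ) pa := .ax (Set.mem_insert _ _)
      have hb' := hbstep _ hs ha'
      have hc' : PCL.Proof (insert pa Γ) pc :=
        (h3.weaken hs).detach (ha'.aI hb')
      exact hb'.aI hc'
    have haa : PCL.Proof Γ (.cimp pa pa) :=
      .mp (.mp (.mp .cimpMono habc) h1) (PCL.Proof.id pa)
    have ha : PCL.Proof Γ pa := .mp .cimpFix haa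
    have hb : PCL.Proof Γ pb := hbstep Γ (subset_refl _) ha
    have hc : PCL.Proof Γ pc := h3.detach (ha.aI hb)
    exact ha.aI (hb.aI hc)
  have hH : PCL.Proof (insert H (∅ : Set (PCL A))) H := .ax (Set.mem_insert _ _)
  exact key _ (.mp .andE1 hH) (.mp .andE1 (.mp .andE2 hH))
    (.mp .andE2 (.mp .andE2 hH))
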